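/- Let Q be a transfer operator and let d ≥ 2 and q ≥ 2 be integers. Regard S_q as a map on the open set of vectors in ℝ^q with strictly positive entries. Then for every v ∈ ℝ^q with ∑_i v_i = 0, the Fréchet derivative of S_q at the barycenter eq satisfies D S_q[eq](v) = (d/Q̂(0))·Q^q v. -/

import Mathlib

open scoped BigOperators

/-- Fourier transform of a transfer operator `Q : ℤ → ℝ`. -/
noncomputable def fourierTransform (Q : ℤ → ℝ) (k : ℝ) : ℝ :=
  ∑' n : ℤ, Q n * Real.cos (n * k)

/-- The mod-`q` fuzzy transfer operator, a `q × q` circulant matrix. -/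
noncomputable def fuzzyOp (Q : ℤ → ℝ) (q : ℕ) : Matrix (Fin q) (Fin q) ℝ :=
  fun r s => ∑' m : ℤ, Q ((r : ℤ) - (s : ℤ) + q * m)

/-- The map `S_q(u) = Q^q u^{⊙d} / (Q̂(0) · ‖u^{⊙d}‖₁)`. -/
noncomputable def Smap (Q : ℤ → ℝ) (q d : ℕ) (u : Fin q → ℝ) : Fin q → ℝ :=
  fun i => (fuzzyOp Q q).mulVec (fun j => u j ^ d) i /
    (fourierTransform Q 0 * ∑ j, |u j ^ d|)

/-- The barycenter `eq = (1/q, …, 1/q)` of the unit simplex. -/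
noncomputable def barycenter (q : ℕ) : Fin q → ℝ := fun _ => 1 / (q : ℝ)

theorem stmt1 (Q : ℤ → ℝ) (hpos : ∀ n : ℤ, 0 < Q n) (hsymm : ∀ n : ℤ, Q (-n) = Q n)
    (hsum : Summable Q) (d q : ℕ) (hd : 2 ≤ d) (hq : 2 ≤ q) :
    ∀ v : Fin q → ℝ, ∑ i, v i = 0 →
      fderiv ℝ (Smap Q q d) (barycenter q) v
        = ((d : ℝ) / fourierTransform Q 0) • (fuzzyOp Q q).mulVec v := by
  intro v hv
  set A := fuzzyOp Q q with hA
  set c := fourierTransform Q 0 with hcdef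
  have hc0 : 0 < c := by
    have hceq : c = ∑' n : ℤ, Q n := by
      rw [hcdef, fourierTransform]
      refine tsum_congr fun n => ?_
      simp
    rw [hceq]
    exact Summable.tsum_pos hsum (fun n => (hpos n).le) 0 (hpos 0)
  have hq0 : (0 : ℝ) < (q : ℝ) := by
    exact_mod_cast lt_of_lt_of_le (by norm_num) hq
  set e := barycenter q with he
  have hej : ∀ j : Fin q, e j = 1 / (q : ℝ) := fun j => rfl
  -- the version of `Smap` without absolute values
  set G : (Fin q → ℝ) → Fin q → ℝ :=
    fun u i => (∑ j, A i j * u j ^ d) / (c * ∑ j, u j ^ d) with hG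
  have hEq : Smap Q q d =ᶠ[nhds e] G := by
    have hpos' : ∀ᶠ u in nhds e, ∀ j : Fin q, 0 < u j := by
      rw [Filter.eventually_all]
      intro j
      have hopen : IsOpen {u : Fin q → ℝ | 0 < u j} :=
        isOpen_lt continuous_const (continuous_apply j)
      exact hopen.mem_nhds (by simp [hej j]; positivity)
    filter_upwards [hpos'] with u hu
    funext i
    have habs : ∀ j : Fin q, |u j ^ d| = u j ^ d := fun j =>
      abs_of_pos (pow_pos (hu j) d)
    simp only [Smap, hG, Matrix.mulVec, dotProduct, habs]
    rfl
  rw [hEq.fderiv_eq]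
  -- derivatives of coordinate powers
  have hpow : ∀ j : Fin q, HasFDerivAt (fun u : Fin q → ℝ => u j ^ d)
      (((d : ℝ) * (1 / (q : ℝ)) ^ (d - 1)) • ContinuousLinearMap.proj (R := ℝ) (φ := fun _ : Fin q => ℝ) j) e := by
    intro j
    have h1 : HasFDerivAt (fun u : Fin q → ℝ => u j)
        (ContinuousLinearMap.proj j (R := ℝ) (φ := fun _ : Fin q => ℝ)) e :=
      hasFDerivAt_apply j e
    have h2 := (hasDerivAt_pow d (e j)).comp_hasFDerivAt e h1
    simpa [hej j, Function.comp_def] using h2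
  -- numerator derivatives
  have hnum : ∀ i : Fin q, HasFDerivAt (fun u : Fin q → ℝ => ∑ j, A i j * u j ^ d)
      (∑ j, (A i j * ((d : ℝ) * (1 / (q : ℝ)) ^ (d - 1))) • ContinuousLinearMap.proj (R := ℝ) (φ := fun _ : Fin q => ℝ) j) e := by
    intro i
    refine HasFDerivAt.fun_sum fun j _ => ?_
    simpa [smul_smul] using (hpow j).const_mul (A i j)
  -- denominator derivative
  have hden : HasFDerivAt (fun u : Fin q → ℝ => c * ∑ j, u j ^ d)
      (∑ j, (c * ((d : ℝ) * (1 / (q : ℝ)) ^ (d - 1))) • ContinuousLinearMap.proj (R := ℝ) (φ := fun _ : Fin q => ℝ) j) e := by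
    have := (HasFDerivAt.sum fun (j : Fin q) (_ : j ∈ Finset.univ) => hpow j).const_mul c
    simpa [Finset.smul_sum, smul_smul] using this
  have hdenval : (c * ∑ j : Fin q, e j ^ d) = c * (q * (1 / (q : ℝ)) ^ d) := by
    simp [hej, mul_comm]
  have hden0 : (c * ∑ j : Fin q, e j ^ d) ≠ 0 := by
    rw [hdenval]; positivity
  -- inverse of denominator
  have hinv : HasFDerivAt (fun u : Fin q → ℝ => (c * ∑ j, u j ^ d)⁻¹)
      ((-((c * ∑ j : Fin q, e j ^ d) ^ 2)⁻¹) •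
        (∑ j, (c * ((d : ℝ) * (1 / (q : ℝ)) ^ (d - 1))) • ContinuousLinearMap.proj (R := ℝ) (φ := fun _ : Fin q => ℝ) j)) e :=
    (hasDerivAt_inv hden0).comp_hasFDerivAt e hden
  -- each component of G
  have hcomp : ∀ i : Fin q, HasFDerivAt (fun u => G u i)
      ((∑ j, A i j * e j ^ d) •
          ((-((c * ∑ j : Fin q, e j ^ d) ^ 2)⁻¹) •
            (∑ j, (c * ((d : ℝ) * (1 / (q : ℝ)) ^ (d - 1))) • ContinuousLinearMap.proj (R := ℝ) (φ := fun _ : Fin q => ℝ) j))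
        + (c * ∑ j : Fin q, e j ^ d)⁻¹ •
          (∑ j, (A i j * ((d : ℝ) * (1 / (q : ℝ)) ^ (d - 1))) • ContinuousLinearMap.proj (R := ℝ) (φ := fun _ : Fin q => ℝ) j))
      e := by
    intro i
    have := (hnum i).fun_mul hinv
    simpa [hG, div_eq_mul_inv] using this
  have hfd : HasFDerivAt G (ContinuousLinearMap.pi fun i =>
      ((∑ j, A i j * e j ^ d) •
          ((-((c * ∑ j : Fin q, e j ^ d) ^ 2)⁻¹) •
            (∑ j, (c * ((d : ℝ) * (1 / (q : ℝ)) ^ (d - 1))) • ContinuousLinearMap.proj (R := ℝ) (φ := fun _ : Fin q => ℝ) j))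
        + (c * ∑ j : Fin q, e j ^ d)⁻¹ •
          (∑ j, (A i j * ((d : ℝ) * (1 / (q : ℝ)) ^ (d - 1))) • ContinuousLinearMap.proj (R := ℝ) (φ := fun _ : Fin q => ℝ) j)))
      e := hasFDerivAt_pi.2 hcomp
  rw [hfd.fderiv]
  funext i
  have hsumv : ∑ j : Fin q, (c * ((d : ℝ) * (1 / (q : ℝ)) ^ (d - 1))) * v j = 0 := by
    rw [← Finset.mul_sum, hv, mul_zero]
  have hnumv : ∑ j : Fin q, (A i j * ((d : ℝ) * (1 / (q : ℝ)) ^ (d - 1))) * v j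
      = ((d : ℝ) * (1 / (q : ℝ)) ^ (d - 1)) * ∑ j, A i j * v j := by
    rw [Finset.mul_sum]; refine Finset.sum_congr rfl fun j _ => by ring
  simp only [ContinuousLinearMap.pi_apply, ContinuousLinearMap.add_apply,
    ContinuousLinearMap.smul_apply, ContinuousLinearMap.sum_apply,
    ContinuousLinearMap.proj_apply, hsumv, hnumv, smul_eq_mul, mul_zero, zero_add,
    Pi.smul_apply]
  rw [hdenval]
  have hpowsplit : (1 / (q : ℝ)) ^ d = (1 / (q : ℝ)) ^ (d - 1) * (1 / (q : ℝ)) := by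
    conv_lhs => rw [show d = (d - 1) + 1 by omega]
    rw [pow_succ]
  rw [hpowsplit]
  have hAv : Matrix.mulVec A v i = ∑ j, A i j * v j := rfl
  rw [hAv]
  have hp : (0:ℝ) < (1 / (q : ℝ)) ^ (d - 1) := by positivity
  field_simp
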